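/- Let G be a finite VZ p-group (i.e., every nonlinear irreducible complex character of G vanishes on G \ Z(G)). Then for every nonlinear irreducible character χ of G, cod(χ) = |G/Z(G)|^{1/2} · |Z(G) : ker(χ)|, and ker(χ) is a proper subgroup of Z(G) not containing G' with Z(G)/ker(χ) cyclic. -/

import Mathlib

open scoped Pointwise

/-- A representation is irreducible if the space is nontrivial and the only
invariant subspaces are `⊥` and `⊤`. -/
def Rep.IsIrreducible {G V : Type*} [Group G] [AddCommGroup V] [Module ℂ V]
    (ρ : Representation ℂ G V) : Prop :=
  Nontrivial V ∧ ∀ W : Submodule ℂ V, (∀ g : G, ∀ v ∈ W, ρ g v ∈ W) → W = ⊥ ∨ W = ⊤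

/-- The kernel of a representation. -/
noncomputable def Rep.ker {G V : Type*} [Group G] [AddCommGroup V] [Module ℂ V]
    (ρ : Representation ℂ G V) : Subgroup G := (Representation.asGroupHom ρ).ker

/-- The codegree of (the character of) a representation: `|G : ker| / degree`. -/
noncomputable def Rep.cod {G V : Type*} [Group G] [AddCommGroup V] [Module ℂ V]
    (ρ : Representation ℂ G V) : ℕ := (Rep.ker ρ).index / Module.finrank ℂ V

/-- The set of codegrees of irreducible (complex) characters of `G`. -/
def codSet (G : Type*) [Group G] : Set ℕ :=
  {n | ∃ (V : Type) (_ : AddCommGroup V) (_ : Module ℂ V) (_ : FiniteDimensional ℂ V)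
      (ρ : Representation ℂ G V), Rep.IsIrreducible ρ ∧ Rep.cod ρ = n}

/-- The set of codegrees of nonlinear irreducible characters of `G`. -/
def nlCodSet (G : Type*) [Group G] : Set ℕ :=
  {n | ∃ (V : Type) (_ : AddCommGroup V) (_ : Module ℂ V) (_ : FiniteDimensional ℂ V)
      (ρ : Representation ℂ G V), Rep.IsIrreducible ρ ∧ 1 < Module.finrank ℂ V ∧
      Rep.cod ρ = n}

/-- The set of degrees of irreducible characters of `G`. -/
def cdSet (G : Type*) [Group G] : Set ℕ :=
  {n | ∃ (V : Type) (_ : AddCommGroup V) (_ : Module ℂ V) (_ : FiniteDimensional ℂ V)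
      (ρ : Representation ℂ G V), Rep.IsIrreducible ρ ∧ Module.finrank ℂ V = n}

/-- `G` is a VZ-group: every nonlinear irreducible character vanishes off the center. -/
def IsVZ (G : Type*) [Group G] : Prop :=
  ∀ (V : Type) (_ : AddCommGroup V) (_ : Module ℂ V) (_ : FiniteDimensional ℂ V)
    (ρ : Representation ℂ G V), Rep.IsIrreducible ρ → 1 < Module.finrank ℂ V →
    ∀ g ∉ Subgroup.center G, LinearMap.trace ℂ V (ρ g) = 0

/-- `G` is a Camina group: the conjugacy class of every `g ∉ G'` is `gG'`. -/
def IsCamina (G : Type*) [Group G] : Prop :=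
  ∀ g : G, g ∉ commutator G → {h | IsConj g h} = g • (commutator G : Set G)

section Aux

open LinearMap Representation

set_option linter.unusedSectionVars false

variable {G : Type*} [Group G] {V : Type} [AddCommGroup V] [Module ℂ V]
  [FiniteDimensional ℂ V] (ρ : Representation ℂ G V)

lemma aux_scalar_inj [Nontrivial V] {s t : ℂ}
    (h : s • (LinearMap.id : V →ₗ[ℂ] V) = t • LinearMap.id) : s = t := by
  obtain ⟨v, hv⟩ := exists_ne (0 : V)
  have h2 := congrArg (fun m : V →ₗ[ℂ] V => m v) h
  simp only [LinearMap.smul_apply, LinearMap.id_apply] at h2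
  have h3 : (s - t) • v = 0 := by rw [sub_smul, h2, sub_self]
  rcases smul_eq_zero.mp h3 with h4 | h4
  · exact sub_eq_zero.mp h4
  · exact absurd h4 hv

lemma aux_schur (hirr : Rep.IsIrreducible ρ)
    (f : V →ₗ[ℂ] V) (hf : ∀ g : G, f ∘ₗ ρ g = ρ g ∘ₗ f) :
    ∃ c : ℂ, f = c • LinearMap.id := by
  haveI := hirr.1
  obtain ⟨c, hc⟩ := Module.End.exists_eigenvalue f
  refine ⟨c, ?_⟩
  have hinv : ∀ g : G, ∀ v ∈ Module.End.eigenspace f c, ρ g v ∈ Module.End.eigenspace f c := by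
    intro g v hv
    rw [Module.End.mem_eigenspace_iff] at hv ⊢
    have h5 := congrArg (fun m : V →ₗ[ℂ] V => m v) (hf g)
    simp only [LinearMap.comp_apply] at h5
    rw [show f ((ρ g) v) = ρ g (f v) from h5, hv, map_smul]
  have hW : Module.End.eigenspace f c = ⊤ := by
    rcases hirr.2 (Module.End.eigenspace f c) hinv with h | h
    · exact absurd h (Module.End.hasEigenvalue_iff.mp hc)
    · exact h
  ext v
  have hv : v ∈ Module.End.eigenspace f c := hW ▸ Submodule.mem_top
  rw [Module.End.mem_eigenspace_iff] at hv
  simpa using hv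

lemma aux_not_scalar (hirr : Rep.IsIrreducible ρ)
    (hnl : 1 < Module.finrank ℂ V)
    (h : ∀ g : G, ∃ c : ℂ, ρ g = c • LinearMap.id) : False := by
  haveI := hirr.1
  obtain ⟨v, hv⟩ := exists_ne (0 : V)
  have hWinv : ∀ g : G, ∀ w ∈ Submodule.span ℂ {v}, ρ g w ∈ Submodule.span ℂ {v} := by
    intro g w hw
    obtain ⟨c, hc⟩ := h g
    rw [hc]
    simpa using Submodule.smul_mem _ c hw
  rcases hirr.2 _ hWinv with h' | h'
  · exact hv (by simpa [Submodule.span_singleton_eq_bot] using h')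
  · have h1 : Module.finrank ℂ (Submodule.span ℂ {v}) = 1 := finrank_span_singleton hv
    rw [h', finrank_top] at h1
    omega

lemma aux_invariants_linHom (hirr : Rep.IsIrreducible ρ) :
    (Representation.linHom ρ ρ).invariants
      = Submodule.span ℂ {(LinearMap.id : V →ₗ[ℂ] V)} := by
  ext f
  rw [Representation.mem_invariants, Submodule.mem_span_singleton]
  constructor
  · intro hf
    have hcomm : ∀ g : G, f ∘ₗ ρ g = ρ g ∘ₗ f := by
      intro g
      have h1 := hf g
      rw [linHom_apply] at h1
      calc f ∘ₗ ρ g = (ρ g ∘ₗ f ∘ₗ ρ g⁻¹) ∘ₗ ρ g := by rw [h1]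
        _ = ρ g ∘ₗ f := by
            ext w
            simp [← Module.End.mul_apply (ρ g⁻¹) (ρ g), ← map_mul]
    obtain ⟨c, hc⟩ := aux_schur ρ hirr f hcomm
    exact ⟨c, hc.symm⟩
  · rintro ⟨a, rfl⟩ g
    rw [linHom_apply]
    ext w
    simp [← Module.End.mul_apply (ρ g) (ρ g⁻¹), ← map_mul]

lemma aux_trace_linHom (g : G) :
    trace ℂ (V →ₗ[ℂ] V) (Representation.linHom ρ ρ g)
      = trace ℂ V (ρ g⁻¹) * trace ℂ V (ρ g) := by
  have h : (Representation.linHom ρ ρ g : (V →ₗ[ℂ] V) →ₗ[ℂ] (V →ₗ[ℂ] V))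
      = (dualTensorHomEquiv ℂ V V).conj (TensorProduct.map (ρ.dual g) (ρ g)) := by
    rw [LinearEquiv.conj_apply]
    have hco : (dualTensorHomEquiv ℂ V V).toLinearMap = dualTensorHom ℂ V V := by
      simp [dualTensorHomEquiv]
      exact LinearMap.ext fun _ => rfl
    rw [hco, Representation.dualTensorHom_comm ρ ρ g, LinearMap.comp_assoc]
    nth_rewrite 1 [show ((ρ.linHom ρ) g : (V →ₗ[ℂ] V) →ₗ[ℂ] (V →ₗ[ℂ] V))
      = (ρ.linHom ρ) g ∘ₗ LinearMap.id from rfl]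
    congr 1
    rw [← hco]
    ext w
    simp
  rw [h, trace_conj', trace_tensorProduct', Representation.dual_apply, trace_transpose']

lemma aux_average [Fintype G] [Invertible (Fintype.card G : ℂ)]
    {W : Type*} [AddCommGroup W] [Module ℂ W] [FiniteDimensional ℂ W]
    (σ : Representation ℂ G W) :
    ⅟(Fintype.card G : ℂ) • ∑ g : G, trace ℂ W (σ g)
      = (Module.finrank ℂ σ.invariants : ℂ) := by
  rw [← (Representation.isProj_averageMap σ).trace]
  simp [Representation.averageMap, GroupAlgebra.average, _root_.map_sum,
    Representation.asAlgebraHom_single, Finset.smul_sum, Finset.mul_sum]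

lemma aux_id_ne_zero [Nontrivial V] : (LinearMap.id : V →ₗ[ℂ] V) ≠ 0 := by
  intro h
  obtain ⟨v, hv⟩ := exists_ne (0 : V)
  exact hv (by simpa using congrArg (fun m : V →ₗ[ℂ] V => m v) h)

lemma aux_orthog [Fintype G] [Invertible (Fintype.card G : ℂ)]
    (hirr : Rep.IsIrreducible ρ) :
    ∑ g : G, trace ℂ V (ρ g⁻¹) * trace ℂ V (ρ g) = (Fintype.card G : ℂ) := by
  haveI := hirr.1
  have h1 := aux_average (Representation.linHom ρ ρ)
  rw [aux_invariants_linHom ρ hirr, finrank_span_singleton (aux_id_ne_zero (V := V))] at h1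
  simp only [aux_trace_linHom ρ] at h1
  rw [show ∑ g : G, trace ℂ V (ρ g⁻¹) * trace ℂ V (ρ g)
      = (Fintype.card G : ℂ) • ((1 : ℕ) : ℂ) from by
    rw [← h1, smul_smul, mul_invOf_self, one_smul]]
  simp

lemma aux_sum_char_zero [Fintype G] [Invertible (Fintype.card G : ℂ)]
    (hirr : Rep.IsIrreducible ρ)
    (hnl : 1 < Module.finrank ℂ V) :
    ∑ g : G, trace ℂ V (ρ g) = 0 := by
  have hinv : ρ.invariants = ⊥ := by
    rcases hirr.2 ρ.invariants (fun g v hv => by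
      rw [show ρ g v = v from hv g]; exact hv) with h | h
    · exact h
    · exfalso
      apply aux_not_scalar ρ hirr hnl
      intro g
      refine ⟨1, ?_⟩
      ext v
      have hv : v ∈ ρ.invariants := h ▸ Submodule.mem_top
      simpa using hv g
  have h1 := aux_average ρ
  rw [hinv] at h1
  simp only [finrank_bot, Nat.cast_zero] at h1
  calc ∑ g : G, trace ℂ V (ρ g)
      = (Fintype.card G : ℂ) • (⅟(Fintype.card G : ℂ) • ∑ g : G, trace ℂ V (ρ g)) := by
        rw [smul_smul, mul_invOf_self, one_smul]
    _ = 0 := by rw [h1, smul_zero]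

end Aux

open scoped commutatorElement

/-- Let `G` be a finite VZ `p`-group. For every nonlinear irreducible
character `χ`: `cod(χ) = |G/Z(G)|^{1/2} · |Z(G) : ker χ|` (stated squared), `ker χ` is a
proper subgroup of `Z(G)` not containing `G'`, and `Z(G)/ker χ` is cyclic. -/
theorem stmt5 {p : ℕ} [Fact p.Prime] (G : Type*) [Group G] [Finite G]
    (hG : IsPGroup p G) (hVZ : IsVZ G)
    (V : Type) [AddCommGroup V] [Module ℂ V] [FiniteDimensional ℂ V]
    (ρ : Representation ℂ G V) (hirr : Rep.IsIrreducible ρ)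
    (hnl : 1 < Module.finrank ℂ V) :
    (Rep.cod ρ) ^ 2 =
        Nat.card (G ⧸ Subgroup.center G) *
          ((Rep.ker ρ).relIndex (Subgroup.center G)) ^ 2 ∧
      Rep.ker ρ < Subgroup.center G ∧
      ¬ commutator G ≤ Rep.ker ρ ∧
      IsCyclic ((Subgroup.center G) ⧸ ((Rep.ker ρ).subgroupOf (Subgroup.center G))) := by
  classical
  cases nonempty_fintype G
  haveI := hirr.1
  haveI : Invertible ((Fintype.card G : ℂ)) :=
    invertibleOfNonzero (by exact_mod_cast Fintype.card_ne_zero)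
  set d := Module.finrank ℂ V with hd
  have hdC : ((d : ℂ)) ≠ 0 := by
    have : d ≠ 0 := by omega
    exact_mod_cast this
  have hvz : ∀ g ∉ Subgroup.center G, LinearMap.trace ℂ V (ρ g) = 0 :=
    hVZ V inferInstance inferInstance inferInstance ρ hirr hnl
  -- kernel membership
  have hker : ∀ g : G, g ∈ Rep.ker ρ ↔ ρ g = 1 := by
    intro g
    rw [Rep.ker, MonoidHom.mem_ker]
    constructor
    · intro h
      have h2 := congrArg Units.val h
      rwa [Representation.asGroupHom_apply, Units.val_one] at h2
    · intro h
      apply Units.ext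
      rw [Representation.asGroupHom_apply, Units.val_one, h]
  -- scalars on the center
  have hcomm : ∀ z : Subgroup.center G, ∀ g : G,
      (ρ (z : G)) ∘ₗ ρ g = ρ g ∘ₗ ρ (z : G) := by
    intro z g
    rw [← Module.End.mul_eq_comp, ← Module.End.mul_eq_comp, ← map_mul, ← map_mul,
      Subgroup.mem_center_iff.mp z.2 g]
  choose c hc using fun z : Subgroup.center G => aux_schur ρ hirr (ρ (z : G)) (hcomm z)
  have hcinj : ∀ {s t : ℂ}, s • (LinearMap.id : V →ₗ[ℂ] V) = t • LinearMap.id → s = t :=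
    fun h => aux_scalar_inj h
  have hc1 : c 1 = 1 := by
    apply hcinj
    rw [← hc 1]
    simp [Module.End.one_eq_id]
  have hcmul : ∀ z w : Subgroup.center G, c (z * w) = c z * c w := by
    intro z w
    apply hcinj
    rw [← hc (z * w)]
    rw [show ((z * w : Subgroup.center G) : G) = (z : G) * (w : G) from rfl, map_mul,
      hc z, hc w]
    ext v
    simp [Module.End.mul_apply, smul_smul, mul_comm]
  have hcunit : ∀ z : Subgroup.center G, c z⁻¹ * c z = 1 := by
    intro z
    rw [← hcmul, inv_mul_cancel, hc1]
  have htr : ∀ z : Subgroup.center G, LinearMap.trace ℂ V (ρ (z : G)) = c z * d := by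
    intro z
    rw [hc z, map_smul, LinearMap.trace_id]
    simp [smul_eq_mul, hd]
  -- kernel is contained in the center
  have hkerZ : Rep.ker ρ ≤ Subgroup.center G := by
    intro g hg
    by_contra hgZ
    have h0 := hvz g hgZ
    rw [(hker g).mp hg, LinearMap.trace_one] at h0
    exact hdC h0
  -- the degree squared is the index of the center
  have horth := aux_orthog ρ hirr
  have hsplit : ∑ g : G, LinearMap.trace ℂ V (ρ g⁻¹) * LinearMap.trace ℂ V (ρ g)
      = ∑ g : G, if g ∈ Subgroup.center G then ((d : ℂ)) ^ 2 else 0 := by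
    refine Finset.sum_congr rfl fun g _ => ?_
    by_cases hg : g ∈ Subgroup.center G
    · rw [if_pos hg]
      have e1 : LinearMap.trace ℂ V (ρ g) = c ⟨g, hg⟩ * d := htr ⟨g, hg⟩
      have e2 : LinearMap.trace ℂ V (ρ g⁻¹) = c (⟨g, hg⟩ : Subgroup.center G)⁻¹ * d :=
        htr (⟨g, hg⟩ : Subgroup.center G)⁻¹
      rw [e1, e2]
      have h3 := hcunit (⟨g, hg⟩ : Subgroup.center G)
      linear_combination ((d : ℂ)) ^ 2 * h3
    · rw [if_neg hg, hvz g hg, mul_zero]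
  rw [hsplit, ← Finset.sum_filter, Finset.sum_const] at horth
  have hcardfilter : (Finset.univ.filter (· ∈ Subgroup.center G)).card
      = Nat.card (Subgroup.center G) := by
    rw [Nat.card_eq_fintype_card, Fintype.card_subtype]
  rw [hcardfilter, nsmul_eq_mul] at horth
  have hnat : Nat.card (Subgroup.center G) * d ^ 2 = Nat.card G := by
    have h5 : ((Nat.card (Subgroup.center G) * d ^ 2 : ℕ) : ℂ) = ((Nat.card G : ℕ) : ℂ) := by
      push_cast
      rw [horth, Nat.card_eq_fintype_card]
    exact_mod_cast h5
  have hZpos : 0 < Nat.card (Subgroup.center G) := Nat.card_pos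
  have hd2 : d ^ 2 = (Subgroup.center G).index := by
    have h6 := Subgroup.card_mul_index (Subgroup.center G)
    exact Nat.eq_of_mul_eq_mul_left hZpos (hnat.trans h6.symm)
  -- the kernel is a proper subgroup of the center
  have hkerne : Rep.ker ρ ≠ Subgroup.center G := by
    intro heq
    have hzero := aux_sum_char_zero ρ hirr hnl
    have hsum : ∑ g : G, LinearMap.trace ℂ V (ρ g)
        = ∑ g : G, if g ∈ Subgroup.center G then ((d : ℂ)) else 0 := by
      refine Finset.sum_congr rfl fun g _ => ?_
      by_cases hg : g ∈ Subgroup.center G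
      · rw [if_pos hg, (hker g).mp (heq ▸ hg : g ∈ Rep.ker ρ), LinearMap.trace_one]
      · rw [if_neg hg, hvz g hg]
    rw [hsum, ← Finset.sum_filter, Finset.sum_const, hcardfilter, nsmul_eq_mul] at hzero
    rcases mul_eq_zero.mp hzero with h7 | h7
    · exact (Nat.cast_ne_zero.mpr hZpos.ne') h7
    · exact hdC h7
  have hlt : Rep.ker ρ < Subgroup.center G := lt_of_le_of_ne hkerZ hkerne
  -- commutator is not contained in the kernel
  have hcom : ¬ commutator G ≤ Rep.ker ρ := by
    intro hle
    apply aux_not_scalar ρ hirr hnl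
    intro g
    apply aux_schur ρ hirr
    intro h
    have hc' : ⁅g, h⁆ ∈ Rep.ker ρ :=
      hle (Subgroup.commutator_mem_commutator (Subgroup.mem_top g) (Subgroup.mem_top h))
    have h1 : ρ ⁅g, h⁆ = 1 := (hker _).mp hc'
    have h2 : ρ (g * h) = ρ (h * g) := by
      have h3 : g * h = ⁅g, h⁆ * (h * g) := by
        rw [commutatorElement_def]; group
      rw [h3, map_mul, h1, one_mul]
    rw [← Module.End.mul_eq_comp, ← Module.End.mul_eq_comp, ← map_mul, ← map_mul, h2]
  -- the cyclic quotient
  have hucomm : ∀ z : Subgroup.center G, c z * c z⁻¹ = 1 := by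
    intro z
    rw [mul_comm]; exact hcunit z
  let φ : Subgroup.center G →* ℂˣ :=
    { toFun := fun z => ⟨c z, c z⁻¹, hucomm z, hcunit z⟩
      map_one' := Units.ext (by exact hc1)
      map_mul' := fun z w => Units.ext (by exact hcmul z w) }
  have hkerφ : φ.ker = (Rep.ker ρ).subgroupOf (Subgroup.center G) := by
    ext z
    rw [MonoidHom.mem_ker, Subgroup.mem_subgroupOf, hker]
    constructor
    · intro h
      have hcz : c z = 1 := congrArg Units.val h
      rw [hc z, hcz, one_smul]
      rfl
    · intro h
      apply Units.ext
      show c z = 1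
      apply hcinj
      rw [← hc z, h]
      simp
      rfl
  have hcyc : IsCyclic
      ((Subgroup.center G) ⧸ ((Rep.ker ρ).subgroupOf (Subgroup.center G))) := by
    have e := (QuotientGroup.quotientMulEquivOfEq hkerφ.symm).trans
      (QuotientGroup.quotientKerEquivRange φ)
    haveI : Finite φ.range := by
      have h8 : ((φ.range : Subgroup ℂˣ) : Set ℂˣ).Finite := by
        rw [MonoidHom.coe_range]; exact Set.finite_range φ
      exact Set.Finite.to_subtype h8
    exact isCyclic_of_surjective e.symm e.symm.surjective
  -- the numerical identity
  refine ⟨?_, hlt, hcom, hcyc⟩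
  have hri := Subgroup.relIndex_mul_index hkerZ
  have hcod : Rep.cod ρ = (Rep.ker ρ).relIndex (Subgroup.center G) * d := by
    rw [Rep.cod, ← hri, ← hd2, pow_two, ← mul_assoc, ← hd,
      Nat.mul_div_cancel _ (by omega : 0 < d)]
  rw [hcod, show Nat.card (G ⧸ Subgroup.center G) = (Subgroup.center G).index from rfl, ← hd2]
  ring
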